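/- Let A be a serial finite length abelian category, let S be a class of indecomposable objects of A, and let M be an indecomposable object of A. If there exists a monomorphism M → X₁ ⊞ ⋯ ⊞ X_m for some finite list of objects X₁, …, X_m of S, then there exists a monomorphism M → X for a single object X of S. (In other words, the indecomposable objects of Cogen(add S) coincide with the indecomposable objects of Cogen S.) -/

import Mathlib

open CategoryTheory CategoryTheory.Limits

universe v u

attribute [local instance] CategoryTheory.Abelian.hasFiniteBiproducts

variable {A : Type u} [Category.{v} A] [Abelian A]

/-- An object is uniserial if its subobjects are totally ordered by inclusion. -/
def Uniserial (U : A) : Prop :=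
  ∀ P Q : Subobject U, P ≤ Q ∨ Q ≤ P

/-- A category is serial if every object is isomorphic to a finite biproduct of
uniserial objects. -/
def IsSerial (A : Type u) [Category.{v} A] [Abelian A] : Prop :=
  ∀ X : A, ∃ (m : ℕ) (Y : Fin m → A),
    (∀ i, Uniserial (Y i)) ∧ Nonempty (X ≅ ⨁ Y)

/-- An object is indecomposable if it is nonzero and in any decomposition as a
biproduct one of the summands is zero. -/
def Indec (X : A) : Prop :=
  ¬ IsZero X ∧ ∀ B C : A, Nonempty (X ≅ B ⊞ C) → IsZero B ∨ IsZero C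

/-- Splitting off the first summand of a biproduct over `Fin (n+1)`. -/
noncomputable def biproductFinSuccIso {n : ℕ} (Y : Fin (n + 1) → A) :
    (⨁ Y) ≅ Y 0 ⊞ ⨁ (Y ∘ Fin.succ) where
  hom := biprod.lift (biproduct.π Y 0) (biproduct.lift fun i => biproduct.π Y i.succ)
  inv := biprod.desc (biproduct.ι Y 0) (biproduct.desc fun i => biproduct.ι Y i.succ)
  hom_inv_id := by
    rw [biprod.lift_desc, biproduct.lift_desc, ← biproduct.total, Fin.sum_univ_succ]
  inv_hom_id := by
    ext <;> simp [biproduct.ι_π, biproduct.ι_π_ne _ (Fin.succ_ne_zero _),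
      biproduct.ι_π_ne _ (Fin.succ_ne_zero _).symm, Fin.succ_inj]

lemma isZero_biproduct_empty (Y : Fin 0 → A) : IsZero (⨁ Y) := by
  rw [IsZero.iff_id_eq_zero]
  apply biproduct.hom_ext
  exact fun j => j.elim0

/-- Uniserial transfers along isomorphisms. -/
lemma uniserial_of_iso {X Y : A} (e : X ≅ Y) (h : Uniserial Y) : Uniserial X := by
  intro P Q
  rcases h ((Subobject.mapIsoToOrderIso e) P) ((Subobject.mapIsoToOrderIso e) Q) with hh | hh
  · exact Or.inl ((Subobject.mapIsoToOrderIso e).le_iff_le.mp hh)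
  · exact Or.inr ((Subobject.mapIsoToOrderIso e).le_iff_le.mp hh)

/-- A binary biproduct with a zero second summand is isomorphic to the first summand. -/
noncomputable def biprodIsoOfIsZeroRight (B C : A) (hC : IsZero C) : B ⊞ C ≅ B where
  hom := biprod.fst
  inv := biprod.inl
  hom_inv_id := by
    have h2 : (biprod.snd : B ⊞ C ⟶ C) = 0 := hC.eq_of_tgt _ _
    rw [← biprod.total, h2, zero_comp, add_zero]
  inv_hom_id := by simp

/-- A binary biproduct with a zero first summand is isomorphic to the second summand. -/
noncomputable def biprodIsoOfIsZeroLeft (B C : A) (hB : IsZero B) : B ⊞ C ≅ C where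
  hom := biprod.snd
  inv := biprod.inr
  hom_inv_id := by
    have h1 : (biprod.fst : B ⊞ C ⟶ B) = 0 := hB.eq_of_tgt _ _
    rw [← biprod.total, h1, zero_comp, zero_add]
  inv_hom_id := by simp

/-- An indecomposable object isomorphic to a finite biproduct is isomorphic to
one of the summands. -/
lemma indec_iso_summand : ∀ (n : ℕ) (Y : Fin n → A) (X : A), Indec X → (X ≅ ⨁ Y) →
    ∃ j, Nonempty (X ≅ Y j) := by
  intro n
  induction n with
  | zero =>
    intro Y X hX e
    exact absurd ((isZero_biproduct_empty Y).of_iso e) hX.1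
  | succ n ih =>
    intro Y X hX e
    have e' : X ≅ Y 0 ⊞ ⨁ (Y ∘ Fin.succ) := e ≪≫ biproductFinSuccIso Y
    rcases hX.2 _ _ ⟨e'⟩ with h0 | h0
    · obtain ⟨j, ⟨ej⟩⟩ := ih (Y ∘ Fin.succ) X hX
        (e' ≪≫ biprodIsoOfIsZeroLeft _ _ h0)
      exact ⟨j.succ, ⟨ej⟩⟩
    · exact ⟨0, ⟨e' ≪≫ biprodIsoOfIsZeroRight _ _ h0⟩⟩

theorem indec_cogen_add_eq_cogen
    -- `A` is a serial finite length abelian category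
    [∀ X : A, IsArtinianObject X] [∀ X : A, IsNoetherianObject X]
    (hser : IsSerial A)
    (S : Set A) (hS : ∀ X ∈ S, Indec X) (M : A) (hM : Indec M)
    (h : ∃ (m : ℕ) (Xs : Fin m → A), (∀ i, Xs i ∈ S) ∧
      ∃ g : M ⟶ ⨁ Xs, Mono g) :
    ∃ X ∈ S, ∃ g : M ⟶ X, Mono g := by
  -- M is uniserial
  obtain ⟨n, Y, hY, ⟨e⟩⟩ := hser M
  obtain ⟨jM, ⟨eM⟩⟩ := indec_iso_summand n Y M hM e
  have hMuni : Uniserial M := uniserial_of_iso eM (hY jM)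
  obtain ⟨m, Xs, hXs, g, hg⟩ := h
  -- m must be positive
  rcases m with - | m
  · exfalso
    apply hM.1
    rw [IsZero.iff_id_eq_zero]
    have : 𝟙 M ≫ g = 0 ≫ g := by
      apply (isZero_biproduct_empty Xs).eq_of_tgt
    exact (cancel_mono g).mp this
  -- the kernels of the components of g
  set K : Fin (m + 1) → Subobject M :=
    fun i => kernelSubobject (g ≫ biproduct.π Xs i) with hK
  -- find a minimal kernel
  classical
  obtain ⟨P, hPmem, hPmin⟩ : ∃ P ∈ Finset.image K Finset.univ,
      ∀ x ∈ Finset.image K Finset.univ, ¬ x < P := by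
    obtain ⟨P, hP1, hP2⟩ := (Finset.image K Finset.univ).exists_minimal
      ⟨K 0, Finset.mem_image_of_mem _ (Finset.mem_univ _)⟩
    exact ⟨P, hP1, fun x hx hlt => hlt.not_ge (hP2 hx hlt.le)⟩
  rw [Finset.mem_image] at hPmem
  obtain ⟨j, -, hj⟩ := hPmem
  -- K j is a least element
  have hleast : ∀ i, K j ≤ K i := by
    intro i
    rcases hMuni (K j) (K i) with hh | hh
    · exact hh
    · have hnlt : ¬ K i < K j := by
        rw [hj]
        exact hPmin _ (Finset.mem_image_of_mem _ (Finset.mem_univ _))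
      rcases eq_or_lt_of_le hh with heq | hlt
      · exact le_of_eq heq.symm
      · exact absurd hlt hnlt
  refine ⟨Xs j, hXs j, g ≫ biproduct.π Xs j, ?_⟩
  -- the kernel arrow composed with g is zero
  have harrow : (K j).arrow ≫ g = 0 := by
    apply biproduct.hom_ext
    intro i
    rw [zero_comp, Category.assoc, ← Subobject.ofLE_arrow (hleast i), Category.assoc]
    have hz : (K i).arrow ≫ g ≫ biproduct.π Xs i = 0 := by
      rw [hK]
      simp
    rw [hz, comp_zero]
  have harrow0 : (kernelSubobject (g ≫ biproduct.π Xs j)).arrow = 0 := by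
    rw [← cancel_mono g, zero_comp]
    exact harrow
  apply Abelian.mono_of_kernel_ι_eq_zero
  rw [← kernelSubobject_arrow', harrow0, comp_zero]
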